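/- Suppose a compact invariant set Γ for a continuous ℝⁿ-action is a finite union of orbits, at least one of which is non-compact (of the form ℝᵏ × T^m with k ≥ 1). Then any invariant probability measure supported on Γ gives zero mass to each non-compact orbit; consequently Γ must contain at least one compact orbit (a torus T^m with m ≤ n). -/

import Mathlib

open MeasureTheory

set_option linter.unusedSectionVars false
set_option linter.unusedVariables false

section Aux
variable {X : Type*} [TopologicalSpace X] {n : ℕ} {Φ : (Fin n → ℝ) → X → X}

private lemma orb_eq (hzero : ∀ x, Φ 0 x = x) (hadd : ∀ s t x, Φ (s + t) x = Φ s (Φ t x))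
    {y z : X} (h : y ∈ Set.range fun t => Φ t z) :
    (Set.range fun t => Φ t y) = Set.range fun t => Φ t z := by
  obtain ⟨s, rfl⟩ := h
  ext a
  constructor
  · rintro ⟨t, rfl⟩; exact ⟨t + s, hadd t s z⟩
  · rintro ⟨t, rfl⟩
    refine ⟨t - s, ?_⟩
    show Φ (t - s) (Φ s z) = Φ t z
    rw [← hadd, sub_add_cancel]

private lemma exists_compact_orbit [T2Space X]
    (hcont : Continuous fun q : (Fin n → ℝ) × X => Φ q.1 q.2)
    (hzero : ∀ x, Φ 0 x = x) (hadd : ∀ s t x, Φ (s + t) x = Φ s (Φ t x)) :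
    ∀ s : Finset X, s.Nonempty → IsCompact (⋃ y ∈ s, Set.range fun t => Φ t y) →
      ∃ y ∈ s, IsCompact (Set.range fun t => Φ t y) := by
  classical
  intro s
  induction s using Finset.strongInduction with
  | _ s ih =>
    intro hs hΓ
    have hΦc : ∀ t, Continuous fun a => Φ t a := fun t =>
      hcont.comp (continuous_const.prodMk continuous_id)
    have hΦx : ∀ y : X, Continuous fun t => Φ t y := fun y =>
      hcont.comp (continuous_id.prodMk continuous_const)
    have horbmem : ∀ y : X, y ∈ (Set.range fun t => Φ t y) := fun y => ⟨0, hzero y⟩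
    set Γ := ⋃ y ∈ s, (Set.range fun t => Φ t y) with hΓdef
    have horbsub : ∀ y ∈ s, (Set.range fun t => Φ t y) ⊆ Γ := fun y hy a ha =>
      Set.mem_biUnion hy ha
    have hΓinv : ∀ (t : Fin n → ℝ) (a : X), a ∈ Γ → Φ t a ∈ Γ := by
      intro t a ha
      simp only [hΓdef, Set.mem_iUnion] at ha ⊢
      obtain ⟨y, hy, r, rfl⟩ := ha
      exact ⟨y, hy, t + r, hadd t r y⟩
    haveI : CompactSpace Γ := isCompact_iff_compactSpace.mp hΓ
    haveI : Nonempty Γ := by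
      obtain ⟨y, hy⟩ := hs
      exact ⟨⟨y, horbsub y hy (horbmem y)⟩⟩
    -- Baire category: some orbit piece has nonempty interior in Γ
    set f : {y // y ∈ s} × ℕ → Set Γ := fun q =>
      Subtype.val ⁻¹' ((fun t => Φ t q.1.1) '' Metric.closedBall 0 q.2) with hf
    have hclosed : ∀ q, IsClosed (f q) := fun q =>
      (((isCompact_closedBall (0 : Fin n → ℝ) q.2).image (hΦx _)).isClosed).preimage
        continuous_subtype_val
    have hcover : ⋃ q, f q = Set.univ := by
      ext z
      simp only [Set.mem_iUnion, Set.mem_univ, iff_true]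
      have hz := z.2
      simp only [hΓdef, Set.mem_iUnion] at hz
      obtain ⟨y, hy, t, ht⟩ := hz
      obtain ⟨N, hN⟩ := exists_nat_ge ‖t‖
      exact ⟨(⟨y, hy⟩, N), t, by simpa [Metric.mem_closedBall, dist_zero_right] using hN, ht⟩
    obtain ⟨q, z₀, hz₀⟩ := nonempty_interior_of_iUnion_of_closed hclosed hcover
    obtain ⟨⟨y, hy⟩, N⟩ := q
    have hz₀f : z₀ ∈ f (⟨y, hy⟩, N) := interior_subset hz₀
    have hz₀orb : (z₀ : X) ∈ Set.range fun t => Φ t y := by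
      obtain ⟨t, _, ht⟩ := hz₀f; exact ⟨t, ht⟩
    -- extract an open set U of X witnessing interior
    have h1 : f (⟨y, hy⟩, N) ∈ nhds z₀ := mem_interior_iff_mem_nhds.mp hz₀
    rw [nhds_induced] at h1
    obtain ⟨V, hV, hVsub⟩ := h1
    set U := interior V with hU
    have hUopen : IsOpen U := isOpen_interior
    have hz₀U : (z₀ : X) ∈ U := mem_interior_iff_mem_nhds.mpr hV
    have hUorb : ∀ a ∈ U, a ∈ Γ → a ∈ (Set.range fun t => Φ t y) := by
      intro a haU haΓ
      have h2 : (⟨a, haΓ⟩ : Γ) ∈ Subtype.val ⁻¹' V := Set.mem_preimage.mpr (interior_subset haU)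
      have h3 := hVsub h2
      obtain ⟨t, _, ht⟩ := h3
      exact ⟨t, ht⟩
    -- the orbit of y is relatively open in Γ
    set W := ⋃₀ {V' : Set X | IsOpen V' ∧ ∀ a ∈ V', a ∈ Γ → a ∈ (Set.range fun t => Φ t y)}
      with hW
    have hWopen : IsOpen W := isOpen_sUnion fun _ h => h.1
    have hWΓ : ∀ a ∈ W, a ∈ Γ → a ∈ (Set.range fun t => Φ t y) := by
      rintro a ⟨V', hV', haV'⟩ haΓ
      exact hV'.2 a haV' haΓ
    have hOrbW : (Set.range fun t => Φ t y) ⊆ W := by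
      rintro w ⟨r, rfl⟩
      obtain ⟨sc, hsc⟩ := hz₀orb
      refine ⟨(fun a => Φ (sc - r) a) ⁻¹' U, ⟨hUopen.preimage (hΦc _), ?_⟩, ?_⟩
      · intro a ha haΓ
        have h4 : Φ (sc - r) a ∈ (Set.range fun t => Φ t y) :=
          hUorb _ ha (hΓinv _ _ haΓ)
        obtain ⟨qq, hqq⟩ := h4
        have hqq' : Φ qq y = Φ (sc - r) a := hqq
        refine ⟨r - sc + qq, ?_⟩
        show Φ (r - sc + qq) y = a
        have e1 : r - sc + (sc - r) = 0 := by abel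
        rw [hadd, hqq', ← hadd, e1, hzero]
      · have hsc' : Φ sc y = (z₀ : X) := hsc
        show Φ (sc - r) (Φ r y) ∈ U
        rw [← hadd, sub_add_cancel, hsc']
        exact hz₀U
    by_cases hcase : Γ ⊆ W
    · refine ⟨y, hy, ?_⟩
      have heq : (Set.range fun t => Φ t y) = Γ :=
        Set.Subset.antisymm (horbsub y hy) (fun a ha => hWΓ a (hcase ha) ha)
      rw [heq]; exact hΓ
    · set s' := s.filter (fun v => v ∉ (Set.range fun t => Φ t y)) with hs'
      have hss : s' ⊂ s := Finset.filter_ssubset.mpr ⟨y, hy, not_not_intro (horbmem y)⟩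
      have hΓ'eq : Γ \ W = ⋃ v ∈ s', Set.range fun t => Φ t v := by
        ext a
        constructor
        · rintro ⟨haΓ, haW⟩
          have ha2 := haΓ
          simp only [hΓdef, Set.mem_iUnion] at ha2
          obtain ⟨v, hv, hav⟩ := ha2
          have hv' : v ∉ (Set.range fun t => Φ t y) := by
            intro hvy
            exact haW (hOrbW ((orb_eq hzero hadd hvy) ▸ hav))
          exact Set.mem_biUnion (Finset.mem_filter.mpr ⟨hv, hv'⟩) hav
        · intro ha
          simp only [Set.mem_iUnion] at ha
          obtain ⟨v, hv, hav⟩ := ha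
          obtain ⟨hvs, hvy⟩ := Finset.mem_filter.mp hv
          refine ⟨horbsub v hvs hav, fun haW => ?_⟩
          have hay : a ∈ (Set.range fun t => Φ t y) := hWΓ a haW (horbsub v hvs hav)
          have h5 : (Set.range fun t => Φ t a) = Set.range fun t => Φ t v :=
            orb_eq hzero hadd hav
          have h6 : (Set.range fun t => Φ t a) = Set.range fun t => Φ t y :=
            orb_eq hzero hadd hay
          exact hvy (by rw [← h6, h5]; exact horbmem v)
      have hΓ'closed : IsClosed (Γ \ W) := hΓ.isClosed.sdiff hWopen
      have hΓ'cpt : IsCompact (⋃ v ∈ s', Set.range fun t => Φ t v) := by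
        rw [← hΓ'eq]
        exact hΓ.of_isClosed_subset hΓ'closed Set.diff_subset
      obtain ⟨a, haΓ, haW⟩ := Set.not_subset.mp hcase
      have has' : a ∈ ⋃ v ∈ s', Set.range fun t => Φ t v := hΓ'eq ▸ ⟨haΓ, haW⟩
      simp only [Set.mem_iUnion] at has'
      obtain ⟨v0, hv0, _⟩ := has'
      obtain ⟨v, hv, hvc⟩ := ih s' hss ⟨v0, hv0⟩ hΓ'cpt
      exact ⟨v, Finset.filter_subset _ _ hv, hvc⟩
end Aux


/-- Let `Γ = ⋃ i, ℝⁿ·(x i)` be a compact invariant set for a continuous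
`ℝⁿ`-action `Φ`, a finite union of orbits, each of which is (equivariantly) of the form
`ℝᵏ × Tᵐ`; assume at least one orbit is non-compact (so `k ≥ 1` for it).  Then any invariant
Borel probability measure supported in `Γ` gives zero mass to each non-compact orbit, and
consequently `Γ` contains at least one compact orbit. -/
theorem invariant_measure_vanishes_on_noncompact_orbits
    {X : Type*} [TopologicalSpace X] [T2Space X] [TopologicalSpace.MetrizableSpace X]
    [MeasurableSpace X] [BorelSpace X]
    (n p : ℕ) (hp : 0 < p)
    (Φ : (Fin n → ℝ) → X → X)
    (hcont : Continuous fun q : (Fin n → ℝ) × X => Φ q.1 q.2)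
    (hzero : ∀ x, Φ 0 x = x)
    (hadd : ∀ s t x, Φ (s + t) x = Φ s (Φ t x))
    (x : Fin p → X)
    (hΓcomp : IsCompact (⋃ i, Set.range fun t => Φ t (x i)))
    -- each orbit is, equivariantly and homeomorphically, of the form `ℝᵏ × Tᵐ`:
    (hstruct : ∀ i, ∃ (k m : ℕ)
        (π : (Fin n → ℝ) →+ (Fin k → ℝ) × (Fin m → AddCircle (1 : ℝ)))
        (e : (Fin k → ℝ) × (Fin m → AddCircle (1 : ℝ)) → X),
        Function.Surjective π ∧
        Topology.IsEmbedding e ∧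
        Set.range e = (Set.range fun t => Φ t (x i)) ∧
        e 0 = x i ∧
        (∀ t v, Φ t (e v) = e (π t + v)) ∧
        (¬ IsCompact (Set.range fun t => Φ t (x i)) → 1 ≤ k))
    -- at least one orbit is non-compact:
    (hnc : ∃ i, ¬ IsCompact (Set.range fun t => Φ t (x i))) :
    (∀ μ : Measure X, IsProbabilityMeasure μ → (∀ t, μ.map (Φ t) = μ) →
        μ (⋃ i, Set.range fun t => Φ t (x i))ᶜ = 0 →
        ∀ i, ¬ IsCompact (Set.range fun t => Φ t (x i)) →
          μ (Set.range fun t => Φ t (x i)) = 0) ∧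
    (∃ i, IsCompact (Set.range fun t => Φ t (x i))) := by
  constructor
  · intro μ hμ hinv _hsupp i hncomp
    obtain ⟨k, m, π, e, hπsurj, hemb, hrange, he0, hequiv, hknc⟩ := hstruct i
    have hk : 1 ≤ k := hknc hncomp
    have hΦc : ∀ t, Continuous fun a => Φ t a := fun t =>
      hcont.comp (continuous_const.prodMk continuous_id)
    -- invariance on images
    have hkey : ∀ (t : Fin n → ℝ) (B : Set X), MeasurableSet B → μ (Φ t '' B) = μ B := by
      intro t B hB
      have h1 : Φ t '' B = Φ (-t) ⁻¹' B := by
        ext a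
        constructor
        · rintro ⟨b, hb, rfl⟩
          show Φ (-t) (Φ t b) ∈ B
          rw [← hadd, neg_add_cancel, hzero]; exact hb
        · intro ha
          exact ⟨Φ (-t) a, ha, by rw [← hadd, add_neg_cancel, hzero]⟩
      rw [h1, ← Measure.map_apply ((hΦc (-t)).measurable) hB, hinv]
    -- the fundamental boxes
    set S : (Fin k → ℤ) → Set ((Fin k → ℝ) × (Fin m → AddCircle (1 : ℝ))) :=
      fun z => {v | ∀ j, ⌊v.1 j⌋ = z j} with hS
    have hSunion : ⋃ z, S z = Set.univ := by
      ext v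
      simp only [Set.mem_iUnion, Set.mem_univ, iff_true]
      exact ⟨fun j => ⌊v.1 j⌋, fun j => rfl⟩
    have hSbox : ∀ z : Fin k → ℤ, S z = ⋃ N : ℕ,
        (Set.Icc (fun j => (z j : ℝ)) (fun j => (z j : ℝ) + 1 - 1 / (N + 1)) ×ˢ
          (Set.univ : Set (Fin m → AddCircle (1 : ℝ)))) := by
      intro z
      ext v
      simp only [Set.mem_iUnion, Set.mem_prod, Set.mem_univ, and_true, Set.mem_Icc, Pi.le_def]
      constructor
      · intro hv
        have hlow : ∀ j, (z j : ℝ) ≤ v.1 j := fun j => (Int.floor_eq_iff.mp (hv j)).1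
        have hupp : ∀ j, v.1 j < (z j : ℝ) + 1 := fun j => (Int.floor_eq_iff.mp (hv j)).2
        have hpos : ∀ j, (0 : ℝ) < (z j : ℝ) + 1 - v.1 j := fun j => by linarith [hupp j]
        choose Nf hNf using fun j => exists_nat_one_div_lt (hpos j)
        refine ⟨Finset.univ.sup Nf, hlow, fun j => ?_⟩
        have h2 : (1 : ℝ) / (Finset.univ.sup Nf + 1) ≤ 1 / (Nf j + 1) := by
          apply one_div_le_one_div_of_le
          · positivity
          · have : Nf j ≤ Finset.univ.sup Nf := Finset.le_sup (Finset.mem_univ j)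
            exact_mod_cast Nat.add_le_add_right this 1
        linarith [hNf j]
      · rintro ⟨N, hlow, hupp⟩ j
        have h3 : (0 : ℝ) < 1 / (N + 1) := by positivity
        rw [Int.floor_eq_iff]
        exact ⟨hlow j, by linarith [hupp j]⟩
    have hSmeas : ∀ z, MeasurableSet (e '' S z) := by
      intro z
      rw [hSbox z, Set.image_iUnion]
      refine MeasurableSet.iUnion fun N => ?_
      exact (((isCompact_Icc.prod isCompact_univ).image hemb.continuous).isClosed).measurableSet
    -- translation invariance
    have htrans : ∀ z : Fin k → ℤ, μ (e '' S z) = μ (e '' S 0) := by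
      intro z
      obtain ⟨t, ht⟩ := hπsurj ((fun j => (z j : ℝ)), 0)
      have haffine :
          (fun w => ((fun j => (z j : ℝ)), (0 : Fin m → AddCircle (1 : ℝ))) + w) '' S 0 = S z := by
        ext v
        constructor
        · rintro ⟨w, hw, rfl⟩ j
          show ⌊(z j : ℝ) + w.1 j⌋ = z j
          rw [add_comm, Int.floor_add_intCast, hw j]; simp
        · intro hv
          refine ⟨((fun j => v.1 j - (z j : ℝ)), v.2), fun j => ?_, ?_⟩
          · show ⌊v.1 j - (z j : ℝ)⌋ = 0
            rw [Int.floor_sub_intCast, hv j, sub_self]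
          · refine Prod.ext ?_ ?_
            · funext j
              show (z j : ℝ) + (v.1 j - (z j : ℝ)) = v.1 j
              ring
            · exact zero_add v.2
      have himg : e '' S z = Φ t '' (e '' S 0) := by
        have h4 : (fun w => Φ t (e w)) =
            fun w => e (((fun j => (z j : ℝ)), (0 : Fin m → AddCircle (1 : ℝ))) + w) := by
          funext w
          rw [hequiv, ht]
        calc e '' S z
            = e '' ((fun w => ((fun j => (z j : ℝ)), (0 : Fin m → AddCircle (1 : ℝ))) + w) '' S 0) := by
              rw [haffine]
          _ = (fun w => e (((fun j => (z j : ℝ)), (0 : Fin m → AddCircle (1 : ℝ))) + w)) '' S 0 :=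
              Set.image_image _ _ _
          _ = (fun w => Φ t (e w)) '' S 0 := by rw [h4]
          _ = Φ t '' (e '' S 0) := (Set.image_image _ _ _).symm
      rw [himg, hkey t _ (hSmeas 0)]
    -- decomposition of the orbit
    have horb : (Set.range fun t => Φ t (x i)) = ⋃ z, e '' S z := by
      rw [← hrange, ← Set.image_univ, ← hSunion, Set.image_iUnion]
    have hdisj : Pairwise (Function.onFun Disjoint fun z => e '' S z) := by
      intro z z' hne
      refine Set.disjoint_image_of_injective hemb.injective ?_
      rw [Set.disjoint_left]
      intro v hv hv'
      exact hne (funext fun j => (hv j).symm.trans (hv' j))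
    have hsum : μ (Set.range fun t => Φ t (x i)) = ∑' z : Fin k → ℤ, μ (e '' S z) := by
      rw [horb]
      exact measure_iUnion hdisj hSmeas
    haveI : Nonempty (Fin k) := ⟨⟨0, hk⟩⟩
    have hc : μ (e '' S 0) = 0 := by
      by_contra hc0
      have h5 : μ (Set.range fun t => Φ t (x i)) = ⊤ := by
        rw [hsum, tsum_congr htrans]
        exact ENNReal.tsum_const_eq_top_of_ne_zero hc0
      exact (measure_ne_top μ _) h5
    rw [hsum, tsum_congr fun z => (htrans z).trans hc, tsum_zero]
  · classical
    have hne : (Finset.image x Finset.univ).Nonempty :=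
      ⟨x ⟨0, hp⟩, Finset.mem_image_of_mem x (Finset.mem_univ _)⟩
    have hUeq : (⋃ y ∈ Finset.image x Finset.univ, Set.range fun t => Φ t y)
        = ⋃ i, Set.range fun t => Φ t (x i) := by
      ext a
      simp only [Set.mem_iUnion, Finset.mem_image, Finset.mem_univ, true_and]
      constructor
      · rintro ⟨y, ⟨i, rfl⟩, ha⟩; exact ⟨i, ha⟩
      · rintro ⟨i, ha⟩; exact ⟨x i, ⟨i, rfl⟩, ha⟩
    obtain ⟨y, hy, hyc⟩ := exists_compact_orbit hcont hzero hadd _ hne (hUeq ▸ hΓcomp)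
    obtain ⟨i, _, rfl⟩ := Finset.mem_image.mp hy
    exact ⟨i, hyc⟩
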